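/- Let N = 2^n and suppose the Grover iterate is implemented with the faulty reflection U_{w̃} (with |w̃⟩ orthogonal to the marked basis vector |0⟩) in place of U_w. Then after any even number 2m of applications of U_{w̃}U_0 to the initial state |w⟩, the probability of measuring outcome 0 equals |⟨0|w⟩|² = 1/N, i.e., it is never amplified above 1/N. -/

import Mathlib

open scoped InnerProductSpace

/-- Reflection about the hyperplane orthogonal to `v`: `1 - 2|v⟩⟨v|`. -/
noncomputable def reflOp {N : ℕ} (v : EuclideanSpace ℂ (Fin N)) :
    EuclideanSpace ℂ (Fin N) →L[ℂ] EuclideanSpace ℂ (Fin N) :=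
  ContinuousLinearMap.id ℂ (EuclideanSpace ℂ (Fin N)) -
    (2 : ℂ) • ((innerSL ℂ v).smulRight v)

lemma reflOp_eq {N : ℕ} (v : EuclideanSpace ℂ (Fin N)) :
    reflOp v = 1 - 2 * ((innerSL ℂ v).smulRight v) := by
  ext x
  simp [reflOp, ContinuousLinearMap.mul_apply, two_smul, two_mul]


/-- if the Grover iterate is implemented with the faulty reflection
`U_{w̃}` (where `|w̃⟩` is the uniform superposition over indices `1, …, N-1`,
orthogonal to the marked vector `|0⟩`) in place of `U_w`, then after any even number
`2m` of applications of `U_{w̃}U₀` to the uniform superposition `|w⟩`, the Born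
probability of measuring outcome `0` is still `|⟨0|w⟩|² = 1/N`: it is never
amplified. -/
theorem stmt18 (N : ℕ) (hN : 2 ≤ N)
    (w wt e0 : EuclideanSpace ℂ (Fin N))
    (hw : w = WithLp.toLp 2 (fun _ => ((1 / Real.sqrt N : ℝ) : ℂ)))
    (hwt : wt = WithLp.toLp 2 (fun j => if j.val = 0 then 0 else ((1 / Real.sqrt (N - 1) : ℝ) : ℂ)))
    (he0 : e0 = EuclideanSpace.single ⟨0, by omega⟩ 1) :
    ∀ m : ℕ, ‖⟪e0, (((reflOp wt).comp (reflOp e0)) ^ (2 * m)) w⟫_ℂ‖ ^ 2 =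
      1 / (N : ℝ) := by
  intro m
  set a := (innerSL ℂ e0).smulRight e0 with hadef
  set b := (innerSL ℂ wt).smulRight wt with hbdef
  have hNR : (1:ℝ) ≤ (N:ℝ) - 1 := by
    have : (2:ℝ) ≤ (N:ℝ) := by exact_mod_cast hN
    linarith
  -- inner products
  have hwt0 : wt ⟨0, by omega⟩ = 0 := by simp [hwt]
  have hee : ⟪e0, e0⟫_ℂ = 1 := by
    simp [he0, EuclideanSpace.inner_single_left, EuclideanSpace.single_apply]
  have hew : ⟪e0, wt⟫_ℂ = 0 := by
    simp [he0, EuclideanSpace.inner_single_left, hwt0]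
  have hwe : ⟪wt, e0⟫_ℂ = 0 := by
    simp [he0, EuclideanSpace.inner_single_right, hwt0]
  have hww : ⟪wt, wt⟫_ℂ = 1 := by
    have hN1 : (0:ℝ) < (N:ℝ) - 1 := by linarith
    have hterm : ∀ i : Fin N,
        (starRingEnd ℂ) (wt i) * wt i = if i.val = 0 then 0 else ((1/((N:ℝ)-1) : ℝ) : ℂ) := by
      intro i
      by_cases h : i.val = 0
      · simp [hwt, h]
      · simp only [hwt, h, if_false, Complex.conj_ofReal]
        rw [← Complex.ofReal_mul]
        congr 1
        rw [div_mul_div_comm, one_mul, Real.mul_self_sqrt hN1.le]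
    rw [PiLp.inner_apply]
    simp only [RCLike.inner_apply]
    rw [Finset.sum_congr rfl (fun i _ => (mul_comm _ _).trans (hterm i))]
    rw [Finset.sum_ite]
    simp only [Finset.sum_const, smul_zero, zero_add]
    have hcard : (Finset.univ.filter (fun i : Fin N => ¬ i.val = 0)).card = N - 1 := by
      have h0 : (Finset.univ.filter (fun i : Fin N => i.val = 0)) = {(⟨0, by omega⟩ : Fin N)} := by
        ext i; simp [Fin.ext_iff]
      rw [Finset.filter_not, Finset.card_sdiff_of_subset (Finset.filter_subset _ _), h0]
      simp
    rw [hcard, nsmul_eq_mul]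
    have hcast : ((N - 1 : ℕ) : ℂ) = (N:ℂ) - 1 := by
      push_cast [Nat.cast_sub (by omega : 1 ≤ N)]; ring
    rw [hcast]
    have hne : (N:ℂ) - 1 ≠ 0 := by
      intro h
      have : (N:ℂ) = 1 := by linear_combination h
      have : (N:ℕ) = 1 := by exact_mod_cast this
      omega
    push_cast
    field_simp
  -- operator identities
  have ha : a * a = a := by
    ext x; simp [hadef, ContinuousLinearMap.mul_apply, inner_smul_right, hee,
      (by rw [norm_eq_sqrt_re_inner (𝕜 := ℂ), hee]; simp : ‖e0‖ = 1)]
  have hb : b * b = b := by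
    ext x; simp [hbdef, ContinuousLinearMap.mul_apply, inner_smul_right, hww,
      (by rw [norm_eq_sqrt_re_inner (𝕜 := ℂ), hww]; simp : ‖wt‖ = 1)]
  have hab : a * b = 0 := by
    ext x; simp [hadef, hbdef, ContinuousLinearMap.mul_apply, inner_smul_right, hew]
  have hba : b * a = 0 := by
    ext x; simp [hadef, hbdef, ContinuousLinearMap.mul_apply, inner_smul_right, hwe]
  have key : ((reflOp wt).comp (reflOp e0)) ^ 2 = 1 := by
    have hcomp : (reflOp wt).comp (reflOp e0) = reflOp wt * reflOp e0 := rfl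
    rw [hcomp, reflOp_eq, reflOp_eq, ← hadef, ← hbdef]
    have h1 : (1 - 2*b) * (1 - 2*a) = 1 - 2*a - 2*b + 4*(b*a) := by noncomm_ring
    have h2 : (1 - 2*a - 2*b)*(1 - 2*a - 2*b)
        = 1 - 4*a - 4*b + 4*(a*a) + 4*(b*a) + 4*(a*b) + 4*(b*b) := by noncomm_ring
    rw [sq, h1, hba, mul_zero, add_zero, h2, ha, hb, hab, hba]
    noncomm_ring
  have hpow : (((reflOp wt).comp (reflOp e0)) ^ (2 * m)) w = w := by
    rw [pow_mul, key, one_pow]; simp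
  rw [hpow]
  have hinner : ⟪e0, w⟫_ℂ = ((1 / Real.sqrt N : ℝ) : ℂ) := by
    simp [he0, hw, EuclideanSpace.inner_single_left]
  rw [hinner]
  have hNpos : (0:ℝ) < (N:ℝ) := by positivity
  rw [Complex.norm_real, Real.norm_eq_abs, abs_of_nonneg (by positivity),
    div_pow, one_pow, Real.sq_sqrt hNpos.le]
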